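/- arXiv:0910.5396 — 2 statements merged into one kernel-verified Lean document; each statement's English description precedes it below -/
import Mathlib

section
/- A bipartite graph G (i.e. a graph whose vertex set admits a partition into two nonempty parts V1, V2 such that every edge joins a vertex of V1 to a vertex of V2) is isomorphic to the bipartite divisor graph B(X) for some nonempty set X of positive integers if and only if G has at least one edge and G has no isolated vertices. -/
open SimpleGraph

/-- The set of primes dividing at least one element of `X`. -/
def rho (X : Set ℕ) : Set ℕ := {p | p.Prime ∧ ∃ x ∈ X, p ∣ x}

/-- `X* = X \ {1}`. -/
def Xstar (X : Set ℕ) : Set ℕ := X \ {1}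

/-- The bipartite divisor graph `B(X)` on the disjoint union `ρ(X) ⊔ X*`:
`p ∈ ρ(X)` and `x ∈ X*` are adjacent iff `p ∣ x`. -/
def BGraph (X : Set ℕ) : SimpleGraph (↥(rho X) ⊕ ↥(Xstar X)) where
  Adj u v :=
    match u, v with
    | Sum.inl p, Sum.inr x => (p : ℕ) ∣ (x : ℕ)
    | Sum.inr x, Sum.inl p => (p : ℕ) ∣ (x : ℕ)
    | _, _ => False
  symm := ⟨by rintro (p | x) (q | y) h <;> exact h⟩
  loopless := ⟨by rintro (p | x) h <;> exact h⟩

/-- The prime vertex graph `Δ(X)` on `ρ(X)`: distinct primes `p, q` are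
adjacent iff `p*q` divides some element of `X`. -/
def DeltaGraph (X : Set ℕ) : SimpleGraph ↥(rho X) where
  Adj p q := p ≠ q ∧ ∃ x ∈ X, (p : ℕ) * (q : ℕ) ∣ x
  symm := by
    constructor
    rintro p q ⟨hne, x, hx, hdvd⟩
    exact ⟨hne.symm, x, hx, by rwa [mul_comm]⟩
  loopless := ⟨by rintro p ⟨hne, -⟩; exact hne rfl⟩

/-- The common divisor graph `Γ(X)` on `X*`: distinct `x, y` are adjacent
iff `gcd(x, y) > 1`. -/
def GammaGraph (X : Set ℕ) : SimpleGraph ↥(Xstar X) where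
  Adj x y := x ≠ y ∧ 1 < Nat.gcd (x : ℕ) (y : ℕ)
  symm := by
    constructor
    rintro x y ⟨hne, h⟩
    exact ⟨hne.symm, by rwa [Nat.gcd_comm]⟩
  loopless := ⟨by rintro x ⟨hne, -⟩; exact hne rfl⟩
/-- Auxiliary: an injective assignment of primes to vertices. -/
noncomputable def bp {V : Type} [Fintype V] (u : V) : ℕ :=
  Nat.nth Nat.Prime (Fintype.equivFin V u)

lemma bp_prime {V : Type} [Fintype V] (u : V) : (bp u).Prime :=
  Nat.prime_nth_prime _

lemma bp_inj {V : Type} [Fintype V] : Function.Injective (bp (V := V)) := by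
  intro a b h
  exact (Fintype.equivFin V).injective
    (Fin.ext (Nat.nth_injective Nat.infinite_setOf_prime h))

/-- The label of a vertex `v`: the product of the primes of its neighbors,
raised to a power distinguishing `v`. -/
noncomputable def bX {V : Type} [Fintype V] (G : SimpleGraph V) [DecidableRel G.Adj] (v : V) : ℕ :=
  (∏ u ∈ Finset.univ.filter (fun u => G.Adj u v), bp u) ^ ((Fintype.equivFin V v : ℕ) + 1)

lemma bp_dvd_bX_iff {V : Type} [Fintype V] (G : SimpleGraph V) [DecidableRel G.Adj] (u v : V) :
    bp u ∣ bX G v ↔ G.Adj u v := by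
  constructor
  · intro h
    have h1 : bp u ∣ ∏ w ∈ Finset.univ.filter (fun w => G.Adj w v), bp w :=
      (bp_prime u).dvd_of_dvd_pow h
    obtain ⟨w, hw, hdw⟩ := (bp_prime u).prime.exists_mem_finset_dvd h1
    have heq : u = w := bp_inj ((Nat.prime_dvd_prime_iff_eq (bp_prime u) (bp_prime w)).mp hdw)
    subst heq
    exact (Finset.mem_filter.mp hw).2
  · intro h
    have h1 : bp u ∣ ∏ w ∈ Finset.univ.filter (fun w => G.Adj w v), bp w :=
      Finset.dvd_prod_of_mem _ (Finset.mem_filter.mpr ⟨Finset.mem_univ u, h⟩)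
    exact h1.trans (dvd_pow_self _ (Nat.succ_ne_zero _))

lemma two_le_bX {V : Type} [Fintype V] (G : SimpleGraph V) [DecidableRel G.Adj] (v : V)
    (h : ∃ w, G.Adj w v) : 2 ≤ bX G v := by
  obtain ⟨w, hw⟩ := h
  have h1 : bp w ∣ bX G v := (bp_dvd_bX_iff G w v).mpr hw
  have h2 : 0 < bX G v := by
    apply pow_pos
    exact Finset.prod_pos (fun i _ => (bp_prime i).pos)
  exact le_trans (bp_prime w).two_le (Nat.le_of_dvd h2 h1)

lemma bX_inj {V : Type} [Fintype V] (G : SimpleGraph V) [DecidableRel G.Adj]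
    (hniso : ∀ v : V, ∃ w, G.Adj v w) : Function.Injective (bX G) := by
  intro a b h
  have hN : ∀ v : V, ∀ u : V, G.Adj u a ↔ G.Adj u b := by
    intro _ u
    rw [← bp_dvd_bX_iff G u a, ← bp_dvd_bX_iff G u b, h]
  have hfil : (Finset.univ.filter (fun u => G.Adj u a)) =
      (Finset.univ.filter (fun u => G.Adj u b)) := by
    apply Finset.filter_congr
    intro u _
    exact hN a u
  have hNa : (∏ u ∈ Finset.univ.filter (fun u => G.Adj u a), bp u) =
      ∏ u ∈ Finset.univ.filter (fun u => G.Adj u b), bp u := by rw [hfil]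
  have h2 : 2 ≤ ∏ u ∈ Finset.univ.filter (fun u => G.Adj u a), bp u := by
    obtain ⟨w, hw⟩ := hniso a
    have hwa : G.Adj w a := hw.symm
    have hd : bp w ∣ ∏ u ∈ Finset.univ.filter (fun u => G.Adj u a), bp u :=
      Finset.dvd_prod_of_mem _ (Finset.mem_filter.mpr ⟨Finset.mem_univ w, hwa⟩)
    have hpos : 0 < ∏ u ∈ Finset.univ.filter (fun u => G.Adj u a), bp u :=
      Finset.prod_pos (fun i _ => (bp_prime i).pos)
    exact le_trans (bp_prime w).two_le (Nat.le_of_dvd hpos hd)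
  have h' : (∏ u ∈ Finset.univ.filter (fun u => G.Adj u a), bp u) ^
      ((Fintype.equivFin V a : ℕ) + 1) =
      (∏ u ∈ Finset.univ.filter (fun u => G.Adj u a), bp u) ^
      ((Fintype.equivFin V b : ℕ) + 1) := by
    unfold bX at h
    rw [hNa]; rw [hNa] at h; exact h
  have he : (Fintype.equivFin V a : ℕ) + 1 = (Fintype.equivFin V b : ℕ) + 1 :=
    Nat.pow_right_injective h2 h'
  exact (Fintype.equivFin V).injective (Fin.ext (by omega))
theorem stmt_0 {V : Type} [Finite V] (G : SimpleGraph V) (V1 V2 : Set V)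
    (hV1 : V1.Nonempty) (hV2 : V2.Nonempty)
    (hdisj : Disjoint V1 V2) (hcover : V1 ∪ V2 = Set.univ)
    (hbip : ∀ u v, G.Adj u v → (u ∈ V1 ∧ v ∈ V2) ∨ (u ∈ V2 ∧ v ∈ V1)) :
    (∃ X : Set ℕ, X.Nonempty ∧ (∀ x ∈ X, 0 < x) ∧ Nonempty (G ≃g BGraph X)) ↔
      ((∃ u v, G.Adj u v) ∧ ∀ v : V, ∃ w, G.Adj v w) := by
  classical
  haveI : Fintype V := Fintype.ofFinite V
  constructor
  · rintro ⟨X, hXne, hXpos, ⟨φ⟩⟩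
    have hB : ∀ z : ↥(rho X) ⊕ ↥(Xstar X), ∃ z', (BGraph X).Adj z z' := by
      rintro (⟨p, hp, x, hxX, hpx⟩ | ⟨x, hxX, hx1⟩)
      · have hx1 : x ≠ 1 := fun h => hp.ne_one (Nat.dvd_one.mp (h ▸ hpx))
        exact ⟨Sum.inr ⟨x, hxX, hx1⟩, hpx⟩
      · have hx1' : x ≠ 1 := hx1
        have hq : (x.minFac).Prime := Nat.minFac_prime hx1'
        exact ⟨Sum.inl ⟨x.minFac, hq, x, hxX, Nat.minFac_dvd x⟩, Nat.minFac_dvd x⟩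
    have hniso : ∀ v : V, ∃ w, G.Adj v w := by
      intro v
      obtain ⟨z', hz'⟩ := hB (φ v)
      refine ⟨φ.symm z', ?_⟩
      have := φ.map_adj_iff (v := v) (w := φ.symm z')
      rw [φ.apply_symm_apply] at this
      exact this.mp hz'
    obtain ⟨v, -⟩ := hV1
    obtain ⟨w, hw⟩ := hniso v
    exact ⟨⟨v, w, hw⟩, hniso⟩
  · rintro ⟨-, hniso⟩
    set X : Set ℕ := bX G '' V2 with hXdef
    have hmem2 : ∀ a : V, a ∉ V1 → a ∈ V2 := by
      intro a ha
      have : a ∈ V1 ∪ V2 := hcover ▸ Set.mem_univ a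
      exact this.resolve_left ha
    have hrho : ∀ a ∈ V1, bp a ∈ rho X := by
      intro a ha
      obtain ⟨w, hw⟩ := hniso a
      have hw2 : w ∈ V2 := by
        rcases hbip a w hw with ⟨-, h⟩ | ⟨h, -⟩
        · exact h
        · exact absurd ha (Set.disjoint_right.mp hdisj h)
      exact ⟨bp_prime a, bX G w, ⟨w, hw2, rfl⟩, (bp_dvd_bX_iff G a w).mpr hw⟩
    have hxs : ∀ a : V, a ∉ V1 → bX G a ∈ Xstar X := by
      intro a ha
      have h2 : 2 ≤ bX G a := by
        obtain ⟨w, hw⟩ := hniso a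
        exact two_le_bX G a ⟨w, hw.symm⟩
      exact ⟨⟨a, hmem2 a ha, rfl⟩, fun h => by
        have : bX G a = 1 := h
        omega⟩
    let g : V → ↥(rho X) ⊕ ↥(Xstar X) := fun a =>
      if h : a ∈ V1 then Sum.inl ⟨bp a, hrho a h⟩ else Sum.inr ⟨bX G a, hxs a h⟩
    have hg1 : ∀ (a : V) (h : a ∈ V1), g a = Sum.inl ⟨bp a, hrho a h⟩ := fun a h => dif_pos h
    have hg2 : ∀ (a : V) (h : a ∉ V1), g a = Sum.inr ⟨bX G a, hxs a h⟩ := fun a h => dif_neg h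
    have hnadj1 : ∀ a b, a ∈ V1 → b ∈ V1 → ¬ G.Adj a b := by
      intro a b ha hb h
      rcases hbip a b h with ⟨-, h2⟩ | ⟨h2, -⟩
      · exact Set.disjoint_left.mp hdisj hb h2
      · exact Set.disjoint_left.mp hdisj ha h2
    have hnadj2 : ∀ a b, a ∉ V1 → b ∉ V1 → ¬ G.Adj a b := by
      intro a b ha hb h
      rcases hbip a b h with ⟨h2, -⟩ | ⟨-, h2⟩
      · exact ha h2
      · exact hb h2
    have hgbij : Function.Bijective g := by
      constructor
      · intro a b hab
        by_cases ha : a ∈ V1 <;> by_cases hb : b ∈ V1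
        · rw [hg1 a ha, hg1 b hb] at hab
          exact bp_inj (congrArg Subtype.val (Sum.inl.inj hab))
        · rw [hg1 a ha, hg2 b hb] at hab; simp at hab
        · rw [hg2 a ha, hg1 b hb] at hab; simp at hab
        · rw [hg2 a ha, hg2 b hb] at hab
          exact bX_inj G hniso (congrArg Subtype.val (Sum.inr.inj hab))
      · rintro (⟨q, hq, x, hxX, hqx⟩ | ⟨x, hxX⟩)
        · obtain ⟨v, hv2, rfl⟩ := hxX
          have h1 : q ∣ ∏ w ∈ Finset.univ.filter (fun w => G.Adj w v), bp w :=
            hq.dvd_of_dvd_pow hqx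
          obtain ⟨u, hu, hqu⟩ := hq.prime.exists_mem_finset_dvd h1
          have hadj : G.Adj u v := (Finset.mem_filter.mp hu).2
          have hqe : q = bp u := (Nat.prime_dvd_prime_iff_eq hq (bp_prime u)).mp hqu
          have hu1 : u ∈ V1 := by
            rcases hbip u v hadj with ⟨h, -⟩ | ⟨-, h⟩
            · exact h
            · exact absurd hv2 (Set.disjoint_left.mp hdisj h)
          refine ⟨u, ?_⟩
          rw [hg1 u hu1]
          exact congrArg Sum.inl (Subtype.ext hqe.symm)
        · obtain ⟨v, hv2, hveq⟩ := hxX.1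
          have hv1 : v ∉ V1 := Set.disjoint_left.mp hdisj.symm hv2
          refine ⟨v, ?_⟩
          rw [hg2 v hv1]
          exact congrArg Sum.inr (Subtype.ext hveq)
    refine ⟨X, ?_, ?_, ⟨⟨Equiv.ofBijective g hgbij, ?_⟩⟩⟩
    · obtain ⟨v, hv⟩ := hV2
      exact ⟨bX G v, v, hv, rfl⟩
    · rintro x ⟨v, hv, rfl⟩
      obtain ⟨w, hw⟩ := hniso v
      have := two_le_bX G v ⟨w, hw.symm⟩
      omega
    · intro a b
      show (BGraph X).Adj (g a) (g b) ↔ G.Adj a b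
      by_cases ha : a ∈ V1 <;> by_cases hb : b ∈ V1
      · rw [hg1 a ha, hg1 b hb]
        exact iff_of_false (fun h => h) (hnadj1 a b ha hb)
      · rw [hg1 a ha, hg2 b hb]
        exact bp_dvd_bX_iff G a b
      · rw [hg2 a ha, hg1 b hb]
        rw [G.adj_comm]
        exact bp_dvd_bX_iff G b a
      · rw [hg2 a ha, hg2 b hb]
        exact iff_of_false (fun h => h) (hnadj2 a b ha hb)
end

section
/- Let p, q ∈ ρ(X) lie in the same connected component of B(X). Then the distance between p and q in B(X) equals twice their distance in Δ(X), i.e. d_B(p,q) = 2·d_Δ(p,q). Similarly, if x, y ∈ X* lie in the same connected component of B(X), then d_B(x,y) = 2·d_Γ(x,y). -/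
open SimpleGraph

-- B-walk to Delta-walk
lemma toDelta (X : Set ℕ) {u v : ↥(rho X) ⊕ ↥(Xstar X)} (w : (BGraph X).Walk u v) :
    (∀ p q : ↥(rho X), u = Sum.inl p → v = Sum.inl q →
      ∃ w' : (DeltaGraph X).Walk p q, 2 * w'.length ≤ w.length) ∧
    (∀ (x : ↥(Xstar X)) (q : ↥(rho X)), u = Sum.inr x → v = Sum.inl q →
      ∃ (r : ↥(rho X)) (w' : (DeltaGraph X).Walk r q),
        (r : ℕ) ∣ (x : ℕ) ∧ 2 * w'.length + 1 ≤ w.length) := by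
  induction w with
  | nil =>
    constructor
    · rintro p q rfl h
      obtain rfl : p = q := by injection h
      exact ⟨Walk.nil, by simp⟩
    · rintro x q rfl h
      exact absurd h (by simp)
  | @cons u m v h w ih =>
    constructor
    · rintro p q rfl rfl
      match m, h with
      | Sum.inr x, h =>
        obtain ⟨r, w', hrx, hlen⟩ := ih.2 x q rfl rfl
        by_cases hpr : p = r
        · subst hpr
          exact ⟨w', by simp [Walk.length_cons]; omega⟩
        · have hadj : (DeltaGraph X).Adj p r := by
            refine ⟨hpr, x, x.2.1, ?_⟩
            have hco : Nat.Coprime (p : ℕ) (r : ℕ) :=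
              (Nat.coprime_primes p.2.1 r.2.1).mpr
                (fun hc => hpr (Subtype.ext hc))
            exact hco.mul_dvd_of_dvd_of_dvd h hrx
          exact ⟨Walk.cons hadj w', by simp [Walk.length_cons]; omega⟩
    · rintro x q rfl rfl
      match m, h with
      | Sum.inl r, h =>
        obtain ⟨w', hlen⟩ := ih.1 r q rfl rfl
        exact ⟨r, w', h, by simp [Walk.length_cons]; omega⟩

lemma toGamma (X : Set ℕ) (hpos : ∀ a ∈ X, 0 < a) {u v : ↥(rho X) ⊕ ↥(Xstar X)} (w : (BGraph X).Walk u v) :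
    (∀ x y : ↥(Xstar X), u = Sum.inr x → v = Sum.inr y →
      ∃ w' : (GammaGraph X).Walk x y, 2 * w'.length ≤ w.length) ∧
    (∀ (p : ↥(rho X)) (y : ↥(Xstar X)), u = Sum.inl p → v = Sum.inr y →
      ∃ (z : ↥(Xstar X)) (w' : (GammaGraph X).Walk z y),
        (p : ℕ) ∣ (z : ℕ) ∧ 2 * w'.length + 1 ≤ w.length) := by
  induction w with
  | nil =>
    constructor
    · rintro x y rfl h
      obtain rfl : x = y := by injection h
      exact ⟨Walk.nil, by simp⟩
    · rintro p y rfl h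
      exact absurd h (by simp)
  | @cons u m v h w ih =>
    constructor
    · rintro x y rfl rfl
      match m, h with
      | Sum.inl p, h =>
        obtain ⟨z, w', hpz, hlen⟩ := ih.2 p y rfl rfl
        by_cases hxz : x = z
        · subst hxz
          exact ⟨w', by simp [Walk.length_cons]; omega⟩
        · have hadj : (GammaGraph X).Adj x z := by
            refine ⟨hxz, ?_⟩
            have : (p : ℕ) ∣ Nat.gcd (x : ℕ) (z : ℕ) := Nat.dvd_gcd h hpz
            exact lt_of_lt_of_le p.2.1.one_lt (Nat.le_of_dvd
              (Nat.gcd_pos_of_pos_left _ (hpos _ x.2.1)) this)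
          exact ⟨Walk.cons hadj w', by simp [Walk.length_cons]; omega⟩
    · rintro p y rfl rfl
      match m, h with
      | Sum.inr z, h =>
        obtain ⟨w', hlen⟩ := ih.1 z y rfl rfl
        exact ⟨z, w', h, by simp [Walk.length_cons]; omega⟩

-- Delta-walk to B-walk
lemma fromDelta (X : Set ℕ) (hpos : ∀ x ∈ X, 0 < x) {p q : ↥(rho X)}
    (w : (DeltaGraph X).Walk p q) :
    ∃ w' : (BGraph X).Walk (Sum.inl p) (Sum.inl q), w'.length = 2 * w.length := by
  induction w with
  | nil => exact ⟨Walk.nil, by simp⟩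
  | @cons p r q h w ih =>
    obtain ⟨w', hlen⟩ := ih
    obtain ⟨hne, x, hxX, hdvd⟩ := h
    have hx1 : x ≠ 1 := by
      intro hc; subst hc
      have := Nat.le_of_dvd one_pos hdvd
      have := p.2.1.one_lt
      have := r.2.1.one_lt
      nlinarith
    refine ⟨Walk.cons (v := Sum.inr ⟨x, hxX, hx1⟩) ?_
      (Walk.cons ?_ w'), ?_⟩
    · exact dvd_trans (Dvd.intro _ rfl) hdvd
    · exact dvd_trans (Dvd.intro_left _ rfl) hdvd
    · show w'.length + 1 + 1 = 2 * (w.length + 1); omega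

lemma fromGamma (X : Set ℕ) {x y : ↥(Xstar X)}
    (w : (GammaGraph X).Walk x y) :
    ∃ w' : (BGraph X).Walk (Sum.inr x) (Sum.inr y), w'.length = 2 * w.length := by
  induction w with
  | nil => exact ⟨Walk.nil, by simp⟩
  | @cons x z y h w ih =>
    obtain ⟨w', hlen⟩ := ih
    obtain ⟨hne, hgcd⟩ := h
    set g := Nat.gcd (x : ℕ) (z : ℕ) with hg
    have hgp : g.minFac.Prime := Nat.minFac_prime (by omega)
    have hdx : g.minFac ∣ (x : ℕ) := (Nat.minFac_dvd g).trans (Nat.gcd_dvd_left _ _)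
    have hdz : g.minFac ∣ (z : ℕ) := (Nat.minFac_dvd g).trans (Nat.gcd_dvd_right _ _)
    have hmem : g.minFac ∈ rho X := ⟨hgp, x, x.2.1, hdx⟩
    refine ⟨Walk.cons (v := Sum.inl ⟨g.minFac, hmem⟩) ?_ (Walk.cons ?_ w'), ?_⟩
    · exact hdx
    · exact hdz
    · show w'.length + 1 + 1 = 2 * (w.length + 1); omega

theorem stmt_2 (X : Set ℕ) (hne : X.Nonempty) (hpos : ∀ x ∈ X, 0 < x)
    (hX1 : X ≠ {1}) :
    (∀ p q : ↥(rho X), (BGraph X).Reachable (Sum.inl p) (Sum.inl q) →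
      (BGraph X).dist (Sum.inl p) (Sum.inl q) = 2 * (DeltaGraph X).dist p q) ∧
    (∀ x y : ↥(Xstar X), (BGraph X).Reachable (Sum.inr x) (Sum.inr y) →
      (BGraph X).dist (Sum.inr x) (Sum.inr y) = 2 * (GammaGraph X).dist x y) := by
  constructor
  · intro p q hreach
    obtain ⟨w, hw⟩ := hreach.exists_walk_length_eq_dist
    obtain ⟨w', hw'⟩ := (toDelta X w).1 p q rfl rfl
    have hdle : (DeltaGraph X).dist p q ≤ w'.length := SimpleGraph.dist_le w'
    have hr : (DeltaGraph X).Reachable p q := ⟨w'⟩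
    obtain ⟨ws, hws⟩ := hr.exists_walk_length_eq_dist
    obtain ⟨wb, hwb⟩ := fromDelta X hpos ws
    have h1 : (BGraph X).dist (Sum.inl p) (Sum.inl q) ≤ 2 * (DeltaGraph X).dist p q := by
      have := SimpleGraph.dist_le wb
      omega
    omega
  · intro x y hreach
    obtain ⟨w, hw⟩ := hreach.exists_walk_length_eq_dist
    obtain ⟨w', hw'⟩ := (toGamma X hpos w).1 x y rfl rfl
    have hdle : (GammaGraph X).dist x y ≤ w'.length := SimpleGraph.dist_le w'
    have hr : (GammaGraph X).Reachable x y := ⟨w'⟩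
    obtain ⟨ws, hws⟩ := hr.exists_walk_length_eq_dist
    obtain ⟨wb, hwb⟩ := fromGamma X ws
    have h1 : (BGraph X).dist (Sum.inr x) (Sum.inr y) ≤ 2 * (GammaGraph X).dist x y := by
      have := SimpleGraph.dist_le wb
      omega
    omega
end
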